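/- (Korepin reduction relation.) Let N ≥ 2 and ν_1,…,ν_N ∈ ℂ. For all λ_2,…,λ_N ∈ ℂ: Z_N(ν_1, λ_2,…,λ_N) = (∏_{k=2}^N (ν_1 − ν_k + 1)) · (∏_{j=2}^N (λ_j − ν_1 + 1)) · Z_{N−1}(λ_2,…,λ_N; ν_2,…,ν_N), where Z_{N−1}(·; ν_2,…,ν_N) denotes the partition function of the six-vertex model with domain wall boundary conditions on N−1 sites built in the same way from the parameters ν_2,…,ν_N. -/

import Mathlib

open scoped BigOperators
noncomputable section

namespace SixVertex

/-- A spin configuration of the `N`-site quantum chain: one spin (`0` = up, `1` = down)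
at each site. Site `k` of the paper (k = 1,…,N) corresponds to index `k-1 : Fin N`. -/
abbrev Cfg (N : ℕ) := Fin N → Fin 2

/-- Operators on the quantum space `H = (ℂ²)^{⊗N}`, represented as matrices in the
standard (spin-configuration) basis. -/
abbrev Op (N : ℕ) := Matrix (Cfg N) (Cfg N) ℂ

/-- The operator acting as the 2×2 matrix `M` in the `k`-th tensor factor and as the
identity elsewhere. -/
def siteOp {N : ℕ} (k : Fin N) (M : Matrix (Fin 2) (Fin 2) ℂ) : Op N :=
  Matrix.of fun s s' => if ∀ i, i ≠ k → s i = s' i then M (s k) (s' k) else 0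

def piPlus : Matrix (Fin 2) (Fin 2) ℂ := !![1, 0; 0, 0]
def piMinus : Matrix (Fin 2) (Fin 2) ℂ := !![0, 0; 0, 1]
def sigmaPlus : Matrix (Fin 2) (Fin 2) ℂ := !![0, 1; 0, 0]
def sigmaMinus : Matrix (Fin 2) (Fin 2) ℂ := !![0, 0; 1, 0]

/-- Rational weight `a(λ,ν) = λ - ν + 1`. -/
def aW (l v : ℂ) : ℂ := l - v + 1
/-- Rational weight `b(λ,ν) = λ - ν`. -/
def bW (l v : ℂ) : ℂ := l - v

/-- The L-operator at site `k` (a 2×2 matrix in the auxiliary space, with entries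
operators on the quantum space); the weight `c` equals `1`. -/
def Lop {N : ℕ} (ν : Fin N → ℂ) (k : Fin N) (l : ℂ) :
    Matrix (Fin 2) (Fin 2) (Op N) :=
  !![aW l (ν k) • siteOp k piPlus + bW l (ν k) • siteOp k piMinus,
       siteOp k sigmaMinus;
     siteOp k sigmaPlus,
       bW l (ν k) • siteOp k piPlus + aW l (ν k) • siteOp k piMinus]

/-- The monodromy matrix `T(λ) = L_N(λ,ν_N) ⋯ L_1(λ,ν_1)`. -/
def monodromy {N : ℕ} (ν : Fin N → ℂ) (l : ℂ) :
    Matrix (Fin 2) (Fin 2) (Op N) :=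
  (((List.finRange N).reverse).map fun k => Lop ν k l).prod

/-- The operator `A(λ)`. -/
def Aop {N : ℕ} (ν : Fin N → ℂ) (l : ℂ) : Op N := monodromy ν l 0 0
/-- The operator `B(λ)`. -/
def Bop {N : ℕ} (ν : Fin N → ℂ) (l : ℂ) : Op N := monodromy ν l 0 1
/-- The operator `C(λ)`. -/
def Cop {N : ℕ} (ν : Fin N → ℂ) (l : ℂ) : Op N := monodromy ν l 1 0
/-- The operator `D(λ)`. -/
def Dop {N : ℕ} (ν : Fin N → ℂ) (l : ℂ) : Op N := monodromy ν l 1 1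

/-- The all-spins-up configuration. -/
def upCfg (N : ℕ) : Cfg N := fun _ => 0
/-- The all-spins-down configuration. -/
def downCfg (N : ℕ) : Cfg N := fun _ => 1

/-- The basis vector of `H` corresponding to a spin configuration `s`. -/
def basisVec {N : ℕ} (s : Cfg N) : Cfg N → ℂ := Pi.single s 1

/-- The all-spins-up vacuum vector `|⇑⟩`. -/
def upVec (N : ℕ) : Cfg N → ℂ := basisVec (upCfg N)
/-- The all-spins-down vector `|⇓⟩`. -/
def downVec (N : ℕ) : Cfg N → ℂ := basisVec (downCfg N)

/-- The partition function of the six-vertex model with domain wall boundary conditions: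
`Z_N(λ_1,…,λ_N) = ⟨⇓| B(λ_N) ⋯ B(λ_1) |⇑⟩`. -/
def Zfun (N : ℕ) (ν : Fin N → ℂ) (lam : Fin N → ℂ) : ℂ :=
  (((List.finRange N).reverse).map fun j => Bop ν (lam j)).prod (downCfg N) (upCfg N)

end SixVertex
end

/- ===================== auxiliary development ===================== -/
noncomputable section
namespace SixVertex

variable {N : ℕ}

lemma sum_cfg_succ (f : Cfg (N + 1) → ℂ) :
    ∑ s, f s = ∑ x : Fin 2, ∑ u : Cfg N, f (Fin.cons x u) := by
  have h : ∑ s, f s = ∑ p : Fin 2 × Cfg N, f (Fin.cons p.1 p.2) :=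
    Fintype.sum_equiv (Fin.consEquiv fun _ => Fin 2).symm _ _
      (fun s => by simp [Fin.consEquiv])
  rw [h, Fintype.sum_prod_type]

lemma cfg_eq_cons (s : Cfg (N + 1)) : s = Fin.cons (s 0) (Fin.tail s) :=
  (Fin.cons_self_tail s).symm

lemma forall_ne_zero_iff {s t : Cfg (N + 1)} :
    (∀ i : Fin (N + 1), i ≠ 0 → s i = t i) ↔ Fin.tail s = Fin.tail t := by
  constructor
  · intro h; funext j; exact h j.succ (Fin.succ_ne_zero j)
  · intro h i hi
    obtain ⟨j, rfl⟩ := Fin.exists_succ_eq_of_ne_zero hi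
    exact congrFun h j

lemma forall_ne_succ_iff {s t : Cfg (N + 1)} {k : Fin N} :
    (∀ i : Fin (N + 1), i ≠ k.succ → s i = t i) ↔
      (s 0 = t 0 ∧ ∀ j : Fin N, j ≠ k → Fin.tail s j = Fin.tail t j) := by
  constructor
  · intro h
    exact ⟨h 0 (Ne.symm (Fin.succ_ne_zero k)),
      fun j hj => h j.succ (fun hc => hj (Fin.succ_injective _ hc))⟩
  · rintro ⟨h0, h⟩ i hi
    rcases Fin.eq_zero_or_eq_succ i with rfl | ⟨j, rfl⟩
    · exact h0
    · exact h j (fun hc => hi (by rw [hc]))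

/-- The embedding `Op N → Op (N+1)`, acting as the identity in the zeroth factor. -/
def emb : Op N →+* Op (N + 1) where
  toFun M := Matrix.of fun s t => if s 0 = t 0 then M (Fin.tail s) (Fin.tail t) else 0
  map_one' := by
    ext s t
    simp only [Matrix.of_apply, Matrix.one_apply]
    by_cases h0 : s 0 = t 0
    · by_cases ht : Fin.tail s = Fin.tail t
      · have : s = t := by rw [cfg_eq_cons s, cfg_eq_cons t, h0, ht]
        simp [h0, ht, this]
      · have : s ≠ t := fun h => ht (by rw [h])
        simp [h0, ht, this]
    · have : s ≠ t := fun h => h0 (by rw [h])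
      simp [h0, this]
  map_mul' M M' := by
    ext s t
    rw [cfg_eq_cons s, cfg_eq_cons t]
    generalize Fin.tail s = u
    generalize Fin.tail t = v
    generalize s 0 = x
    generalize t 0 = y
    simp only [Matrix.of_apply, Matrix.mul_apply]
    rw [sum_cfg_succ]
    simp only [Matrix.of_apply, Fin.cons_zero, Fin.tail_cons, Fin.sum_univ_two]
    fin_cases x <;> fin_cases y <;> simp
  map_zero' := by ext s t; simp
  map_add' M M' := by
    ext s t
    simp only [Matrix.of_apply, Matrix.add_apply]
    split <;> simp

lemma emb_apply (M : Op N) (s t : Cfg (N + 1)) :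
    emb M s t = if s 0 = t 0 then M (Fin.tail s) (Fin.tail t) else 0 := rfl

lemma emb_apply_cons (M : Op N) (x y : Fin 2) (u v : Cfg N) :
    emb M (Fin.cons x u) (Fin.cons y v) = if x = y then M u v else 0 := by
  simp [emb_apply]

lemma emb_smul (c : ℂ) (M : Op N) : emb (c • M) = c • emb M := by
  ext s t
  simp only [emb_apply, Matrix.smul_apply, smul_eq_mul]
  split <;> simp

lemma emb_siteOp (k : Fin N) (M : Matrix (Fin 2) (Fin 2) ℂ) :
    emb (siteOp k M) = siteOp k.succ M := by
  ext s t
  simp only [emb_apply, siteOp, Matrix.of_apply]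
  by_cases h0 : s 0 = t 0
  · simp only [h0, if_true]
    rw [if_congr forall_ne_succ_iff rfl rfl]
    simp only [h0, true_and]
    rfl
  · rw [if_neg h0, if_neg]
    intro hc
    exact h0 (forall_ne_succ_iff.mp hc).1

lemma siteOp_lin (k : Fin N) (c d : ℂ) (M M' : Matrix (Fin 2) (Fin 2) ℂ) :
    c • siteOp k M + d • siteOp k M' = siteOp k (c • M + d • M') := by
  ext s t
  simp only [siteOp, Matrix.add_apply, Matrix.smul_apply, Matrix.of_apply, smul_eq_mul]
  split <;> simp

lemma Lop_succ (ν : Fin (N + 1) → ℂ) (k : Fin N) (l : ℂ) :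
    Lop ν k.succ l = emb.mapMatrix (Lop (ν ∘ Fin.succ) k l) := by
  ext i j
  simp only [RingHom.mapMatrix_apply, Matrix.map_apply]
  fin_cases i <;> fin_cases j <;>
    simp [Lop, map_add, emb_smul, emb_siteOp, Function.comp]

lemma monodromy_succ (ν : Fin (N + 1) → ℂ) (l : ℂ) :
    monodromy ν l = emb.mapMatrix (monodromy (ν ∘ Fin.succ) l) * Lop ν 0 l := by
  have key : (((List.finRange N).reverse).map fun k => Lop ν k.succ l).prod
      = emb.mapMatrix (monodromy (ν ∘ Fin.succ) l) := by
    unfold monodromy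
    rw [map_list_prod (emb.mapMatrix : Matrix (Fin 2) (Fin 2) (Op N) →+* _), List.map_map]
    congr 1
    apply List.map_congr_left
    intro k _
    simp only [Function.comp_apply]
    exact Lop_succ ν k l
  rw [show monodromy ν l
      = (((List.finRange (N + 1)).reverse).map fun k => Lop ν k l).prod from rfl]
  rw [List.finRange_succ, List.reverse_cons, List.map_append, List.prod_append]
  rw [← key]
  congr 1
  · congr 1
    rw [← List.map_reverse, List.map_map]
    rfl
  · simp

lemma emb_mul_site (M : Op N) (P : Matrix (Fin 2) (Fin 2) ℂ)
    (x y : Fin 2) (s t : Cfg N) :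
    (emb M * siteOp 0 P : Op (N + 1)) (Fin.cons x s) (Fin.cons y t) = M s t * P x y := by
  rw [Matrix.mul_apply, sum_cfg_succ]
  have hterm : ∀ z : Fin 2, ∀ u : Cfg N,
      emb M (Fin.cons x s) (Fin.cons z u) * siteOp 0 P (Fin.cons z u) (Fin.cons y t)
      = (if x = z then M s u else 0) * (if u = t then P z y else 0) := by
    intro z u
    rw [emb_apply_cons]
    congr 1
    simp only [siteOp, Matrix.of_apply, Fin.cons_zero]
    rw [if_congr (forall_ne_zero_iff) rfl rfl]
    simp [Fin.tail_cons]
  simp only [hterm]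
  rw [Fin.sum_univ_two]
  fin_cases x <;> simp [Finset.sum_ite_eq', mul_comm]

lemma Bop_decomp (ν : Fin (N + 1) → ℂ) (l : ℂ) :
    Bop ν l = emb (Aop (ν ∘ Fin.succ) l) * siteOp 0 sigmaMinus
      + emb (Bop (ν ∘ Fin.succ) l) *
          siteOp 0 (bW l (ν 0) • piPlus + aW l (ν 0) • piMinus) := by
  unfold Bop Aop
  rw [monodromy_succ, Matrix.mul_apply, Fin.sum_univ_two, ← siteOp_lin]
  simp [Lop, RingHom.mapMatrix_apply]

lemma Aop_decomp (ν : Fin (N + 1) → ℂ) (l : ℂ) :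
    Aop ν l = emb (Aop (ν ∘ Fin.succ) l) *
          siteOp 0 (aW l (ν 0) • piPlus + bW l (ν 0) • piMinus)
      + emb (Bop (ν ∘ Fin.succ) l) * siteOp 0 sigmaPlus := by
  unfold Bop Aop
  rw [monodromy_succ, Matrix.mul_apply, Fin.sum_univ_two, ← siteOp_lin]
  simp [Lop, RingHom.mapMatrix_apply]

lemma Bop_cons (ν : Fin (N + 1) → ℂ) (l : ℂ) (x : Fin 2) (s t : Cfg N) :
    Bop ν l (Fin.cons x s) (Fin.cons 1 t)
      = if x = 1 then aW l (ν 0) * Bop (ν ∘ Fin.succ) l s t else 0 := by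
  rw [Bop_decomp]
  simp only [Matrix.add_apply]
  rw [emb_mul_site, emb_mul_site]
  fin_cases x <;>
    simp [sigmaMinus, piPlus, piMinus, Matrix.add_apply, Matrix.smul_apply, mul_comm]

lemma Bop_cons_col0 (ν : Fin (N + 1) → ℂ) (l : ℂ) (x : Fin 2) (s t : Cfg N) :
    Bop ν l (Fin.cons x s) (Fin.cons 0 t)
      = if x = 1 then Aop (ν ∘ Fin.succ) l s t
          else bW l (ν 0) * Bop (ν ∘ Fin.succ) l s t := by
  rw [Bop_decomp]
  simp only [Matrix.add_apply]
  rw [emb_mul_site, emb_mul_site]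
  fin_cases x <;>
    simp [sigmaMinus, piPlus, piMinus, Matrix.add_apply, Matrix.smul_apply, mul_comm]

lemma Aop_cons (ν : Fin (N + 1) → ℂ) (l : ℂ) (x : Fin 2) (s t : Cfg N) :
    Aop ν l (Fin.cons x s) (Fin.cons 0 t)
      = if x = 0 then aW l (ν 0) * Aop (ν ∘ Fin.succ) l s t else 0 := by
  rw [Aop_decomp]
  simp only [Matrix.add_apply]
  rw [emb_mul_site, emb_mul_site]
  fin_cases x <;>
    simp [sigmaPlus, piPlus, piMinus, Matrix.add_apply, Matrix.smul_apply, mul_comm]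

lemma up_cons : Fin.cons (0 : Fin 2) (upCfg N) = upCfg (N + 1) := by
  funext i
  rcases Fin.eq_zero_or_eq_succ i with rfl | ⟨j, rfl⟩ <;> simp [upCfg]

lemma down_cons : Fin.cons (1 : Fin 2) (downCfg N) = downCfg (N + 1) := by
  funext i
  rcases Fin.eq_zero_or_eq_succ i with rfl | ⟨j, rfl⟩ <;> simp [downCfg]

lemma Aop_up (N : ℕ) (ν : Fin N → ℂ) (l : ℂ) (s : Cfg N) :
    Aop ν l s (upCfg N) = if s = upCfg N then ∏ k, aW l (ν k) else 0 := by
  induction N with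
  | zero =>
    have hs : s = upCfg 0 := Subsingleton.elim _ _
    have : Aop ν l = (1 : Op 0) := by
      unfold Aop monodromy
      simp [Matrix.one_apply]
    simp [this, hs, Matrix.one_apply]
  | succ n ih =>
    have hsplit : Aop ν l s (upCfg (n + 1))
        = if s 0 = 0 then aW l (ν 0) * Aop (ν ∘ Fin.succ) l (Fin.tail s) (upCfg n)
          else 0 := by
      conv_lhs => rw [cfg_eq_cons s, ← up_cons]
      rw [Aop_cons]
    rw [hsplit, ih]
    by_cases h0 : s 0 = 0
    · by_cases ht : Fin.tail s = upCfg n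
      · have hs : s = upCfg (n + 1) := by rw [cfg_eq_cons s, h0, ht, up_cons]
        subst hs
        simp [h0, ht, Fin.prod_univ_succ, Function.comp, upCfg]
      · have hs : s ≠ upCfg (n + 1) := fun hc => ht (by rw [hc]; rfl)
        simp [h0, ht, hs]
    · have hs : s ≠ upCfg (n + 1) := fun hc => h0 (by rw [hc]; rfl)
      simp [h0, hs]

lemma Bop_up (ν : Fin (N + 1) → ℂ) (s : Cfg (N + 1)) :
    Bop ν (ν 0) s (upCfg (N + 1))
      = if s = Fin.cons 1 (upCfg N) then ∏ k : Fin N, aW (ν 0) (ν k.succ) else 0 := by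
  have hb : bW (ν 0) (ν 0) = 0 := by simp [bW]
  have hsplit : Bop ν (ν 0) s (upCfg (N + 1))
      = if s 0 = 1 then Aop (ν ∘ Fin.succ) (ν 0) (Fin.tail s) (upCfg N)
        else bW (ν 0) (ν 0) * Bop (ν ∘ Fin.succ) (ν 0) (Fin.tail s) (upCfg N) := by
    conv_lhs => rw [cfg_eq_cons s, ← up_cons]
    rw [Bop_cons_col0]
  rw [hsplit, Aop_up]
  by_cases h0 : s 0 = 1
  · by_cases ht : Fin.tail s = upCfg N
    · have hs : s = (Fin.cons 1 (upCfg N) : Cfg (N + 1)) := by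
        rw [cfg_eq_cons s, h0, ht]
      subst hs
      simp [Function.comp]
    · have hs : s ≠ (Fin.cons 1 (upCfg N) : Cfg (N + 1)) := by
        intro hc
        exact ht (by rw [hc]; exact Fin.tail_cons _ _)
      simp [h0, ht, hs]
  · have hs : s ≠ (Fin.cons 1 (upCfg N) : Cfg (N + 1)) := by
      intro hc
      exact h0 (by rw [hc]; exact Fin.cons_zero _ _)
    simp [h0, hs, hb]

lemma prodB_cons (ν : Fin (N + 1) → ℂ) (L : List ℂ) (x : Fin 2) (s t : Cfg N) :
    ((L.map (Bop ν)).prod) (Fin.cons x s) (Fin.cons 1 t)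
      = if x = 1 then (L.map fun l => aW l (ν 0)).prod *
          ((L.map (Bop (ν ∘ Fin.succ))).prod) s t else 0 := by
  induction L generalizing x s t with
  | nil =>
    simp only [List.map_nil, List.prod_nil]
    rw [Matrix.one_apply, Matrix.one_apply]
    by_cases hx : x = 1
    · by_cases hst : s = t
      · simp [hx, hst]
      · have : (Fin.cons x s : Cfg (N + 1)) ≠ Fin.cons 1 t := by
          intro hc; exact hst (Fin.cons_injective2 hc).2
        simp [hx, hst, this]
    · have : (Fin.cons x s : Cfg (N + 1)) ≠ Fin.cons 1 t := by
        intro hc; exact hx (Fin.cons_injective2 hc).1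
      simp [hx, this]
  | cons l L ih =>
    simp only [List.map_cons, List.prod_cons]
    rw [Matrix.mul_apply, sum_cfg_succ]
    have hterm : ∀ z : Fin 2, ∀ u : Cfg N,
        Bop ν l (Fin.cons x s) (Fin.cons z u) *
          ((L.map (Bop ν)).prod) (Fin.cons z u) (Fin.cons 1 t)
        = if z = 1 then
            Bop ν l (Fin.cons x s) (Fin.cons 1 u) *
              ((L.map fun l => aW l (ν 0)).prod *
                ((L.map (Bop (ν ∘ Fin.succ))).prod) u t)
          else 0 := by
      intro z u
      rw [ih]
      by_cases hz : z = 1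
      · subst hz; simp
      · simp [hz]
    simp only [hterm]
    rw [Fin.sum_univ_two]
    have h01 : ((0 : Fin 2) = 1) = False := by simp
    have h11 : ((1 : Fin 2) = 1) = True := by simp
    simp only [h01, h11, if_false, if_true, Finset.sum_const_zero, zero_add]
    simp only [Bop_cons]
    by_cases hx : x = 1
    · simp only [hx, h11, if_true]
      rw [Matrix.mul_apply, Finset.mul_sum]
      apply Finset.sum_congr rfl
      intro u _
      ring
    · simp only [if_neg hx, zero_mul, Finset.sum_const_zero]

end SixVertex
end

noncomputable section
namespace SixVertex

variable {N : ℕ}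

lemma map_succ_reverse {β : Type*} (f : Fin (N + 1) → β) :
    (((List.finRange N).map Fin.succ).reverse).map f
      = ((List.finRange N).reverse).map (fun j => f j.succ) := by
  rw [← List.map_reverse, List.map_map]
  rfl

lemma list_prod_aW (ν0 : ℂ) (lam : Fin (N + 1) → ℂ) :
    (((((List.finRange N).map Fin.succ).reverse).map lam).map fun l => aW l ν0).prod
      = ∏ j : Fin N, aW (lam j.succ) ν0 := by
  rw [List.map_map, map_succ_reverse, List.map_reverse, List.prod_reverse,
    ← Fin.prod_univ_def]
  rfl

end SixVertex
end

open SixVertex in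
theorem Zfun_reduction (N : ℕ) (hN : 1 ≤ N) (ν : Fin (N + 1) → ℂ)
    (lam : Fin (N + 1) → ℂ) (h1 : lam 0 = ν 0) :
    Zfun (N + 1) ν lam =
      (∏ k : Fin N, (ν 0 - ν k.succ + 1)) * (∏ j : Fin N, (lam j.succ - ν 0 + 1)) *
        Zfun N (ν ∘ Fin.succ) (lam ∘ Fin.succ) := by
  rw [show Zfun (N + 1) ν lam
      = (((List.finRange (N + 1)).reverse).map fun j => Bop ν (lam j)).prod
          (downCfg (N + 1)) (upCfg (N + 1)) from rfl]
  rw [List.finRange_succ, List.reverse_cons, List.map_append, List.prod_append]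
  simp only [List.map_cons, List.map_nil, List.prod_cons, List.prod_nil, mul_one]
  set P := ((((List.finRange N).map Fin.succ).reverse).map fun j => Bop ν (lam j)).prod with hPdef
  rw [Matrix.mul_apply, h1]
  have hcollapse :
      ∑ s', P (downCfg (N + 1)) s' * Bop ν (ν 0) s' (upCfg (N + 1))
        = P (downCfg (N + 1)) (Fin.cons 1 (upCfg N)) *
            ∏ k : Fin N, aW (ν 0) (ν k.succ) := by
    rw [Finset.sum_eq_single (Fin.cons 1 (upCfg N) : Cfg (N + 1))]
    · rw [Bop_up, if_pos rfl]
    · intro b _ hb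
      rw [Bop_up, if_neg hb, mul_zero]
    · intro h
      exact absurd (Finset.mem_univ _) h
  rw [hcollapse]
  have hP : P = (((((List.finRange N).map Fin.succ).reverse).map lam).map (Bop ν)).prod := by
    rw [hPdef, List.map_map]
    rfl
  have hmain : P (downCfg (N + 1)) (Fin.cons 1 (upCfg N))
      = (∏ j : Fin N, aW (lam j.succ) (ν 0)) *
          Zfun N (ν ∘ Fin.succ) (lam ∘ Fin.succ) := by
    rw [hP, ← down_cons, prodB_cons, if_pos rfl, list_prod_aW]
    congr 1
    unfold Zfun
    congr 1
    rw [List.map_map, map_succ_reverse]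
    rfl
  rw [hmain]
  simp only [aW]
  ring
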